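/- Houghton's group H_2 equals the subgroup of Sym(X_2) generated by the permutation g_2 and the transposition τ exchanging (1,0) and (2,0). -/

import Mathlib

namespace HoughtonPaper

/-- The set `X_n = {1,…,n} × ℕ` (rays indexed by `Fin n`). -/
abbrev X (n : ℕ) := Fin n × ℕ

/-- `g` acts as the translation by `t i` on the ray `i` from the point `z` on. -/
def EvTransFrom {n : ℕ} (g : Equiv.Perm (X n)) (t : Fin n → ℤ) (z : ℕ) : Prop :=
  ∀ (i : Fin n) (m : ℕ), z ≤ m →
    (g (i, m)).1 = i ∧ ((g (i, m)).2 : ℤ) = (m : ℤ) + t i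

/-- `g` is eventually a translation with translation vector `t`. -/
def EvTrans {n : ℕ} (g : Equiv.Perm (X n)) (t : Fin n → ℤ) : Prop :=
  ∃ z : ℕ, EvTransFrom g t z

/-- Membership in Houghton's group `H_n`. -/
def InH {n : ℕ} (g : Equiv.Perm (X n)) : Prop :=
  ∃ t : Fin n → ℤ, EvTrans g t

/-- Support of a permutation. -/
def supp {α : Type*} (g : Equiv.Perm α) : Set α := {x | g x ≠ x}

/-- Membership in `FSym(X_n)`, the finitely supported permutations. -/
def InFSym {n : ℕ} (g : Equiv.Perm (X n)) : Prop := (supp g).Finite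

/-- Two sets are almost equal if their symmetric difference is finite. -/
def AlmostEq {α : Type*} (A B : Set α) : Prop := (symmDiff A B).Finite

/-- The set `X_{i,r}(g) = {(i,m) : m ≡ r mod |t_i(g)|}`, for `t` the translation vector. -/
def Xir {n : ℕ} (i : Fin n) (t : Fin n → ℤ) (r : ℕ) : Set (X n) :=
  {p : X n | p.1 = i ∧ p.2 % (t i).natAbs = r}

/-- Forward orbit `{(i,m)g^k : k ≥ 0}`. -/
def fwdOrbit {n : ℕ} (g : Equiv.Perm (X n)) (p : X n) : Set (X n) :=
  Set.range fun k : ℕ => (g ^ k) p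

/-- The orbit `{x g^k : k ∈ ℤ}`. -/
def orbit {n : ℕ} (g : Equiv.Perm (X n)) (p : X n) : Set (X n) :=
  Set.range fun k : ℤ => (g ^ k) p

/-- `A` is an infinite orbit of `g`. -/
def IsInfOrbit {n : ℕ} (g : Equiv.Perm (X n)) (A : Set (X n)) : Prop :=
  (∃ p : X n, A = orbit g p) ∧ A.Infinite

/-- The generating relation of `∼_g`: some infinite orbit of `g` is almost equal
to `X_{i,r}(g) ∪ X_{j,s}(g)`. -/
def BaseRel {n : ℕ} (g : Equiv.Perm (X n)) (t : Fin n → ℤ) (i j : Fin n) : Prop :=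
  ∃ r s : ℕ, r < (t i).natAbs ∧ s < (t j).natAbs ∧
    ∃ A : Set (X n), IsInfOrbit g A ∧ AlmostEq A (Xir i t r ∪ Xir j t s)

/-- The equivalence relation `∼_g` on the rays, generated by `BaseRel`. -/
def SimRel {n : ℕ} (g : Equiv.Perm (X n)) (t : Fin n → ℤ) : Fin n → Fin n → Prop :=
  Relation.EqvGen (BaseRel g t)

def genFun {n : ℕ} [NeZero n] (i : Fin n) : X n → X n :=
  fun p =>
    if p.1 = 0 then ((0 : Fin n), p.2 + 1)
    else if p.1 = i then (if p.2 = 0 then ((0 : Fin n), 0) else (i, p.2 - 1))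
    else p

def genInvFun {n : ℕ} [NeZero n] (i : Fin n) : X n → X n :=
  fun p =>
    if p.1 = 0 then (if p.2 = 0 then (i, 0) else ((0 : Fin n), p.2 - 1))
    else if p.1 = i then (i, p.2 + 1)
    else p

/-- The generator `g_i` of Houghton's group (ray `1` of the paper is ray `0` here). -/
def gen {n : ℕ} [NeZero n] (i : Fin n) (hi : i ≠ 0) : Equiv.Perm (X n) where
  toFun := genFun i
  invFun := genInvFun i
  left_inv := by
    rintro ⟨j, m⟩
    by_cases hj : j = 0
    · subst hj
      simp [genFun, genInvFun]
    · by_cases hji : j = i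
      · subst hji
        rcases Nat.eq_zero_or_pos m with hm | hm
        · subst hm; simp [genFun, genInvFun, hi]
        · simp [genFun, genInvFun, hi, hm.ne', Nat.sub_add_cancel hm]
      · simp [genFun, genInvFun, hj, hji]
  right_inv := by
    rintro ⟨j, m⟩
    by_cases hj : j = 0
    · subst hj
      rcases Nat.eq_zero_or_pos m with hm | hm
      · subst hm; simp [genFun, genInvFun, hi]
      · simp [genFun, genInvFun, hm.ne', hi.symm, Nat.sub_add_cancel hm]
    · by_cases hji : j = i
      · subst hji
        simp [genFun, genInvFun, hj]
      · simp [genFun, genInvFun, hj, hji]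

/-- The transposition `τ` exchanging `(1,0)` and `(2,0)` (here `(0,0)` and `(1,0)`). -/
def tau (n : ℕ) [NeZero n] : Equiv.Perm (X n) :=
  Equiv.swap ((0 : Fin n), 0) ((1 : Fin n), 0)

/-- Letters of the alphabet `{g_2,…,g_n}^{±1}`. -/
abbrev Letter (n : ℕ) [NeZero n] := {i : Fin n // i ≠ 0} × Bool

/-- Words over `{g_2,…,g_n}^{±1}`. -/
abbrev Word (n : ℕ) [NeZero n] := List (Letter n)

def evalLetter {n : ℕ} [NeZero n] (l : Letter n) : Equiv.Perm (X n) :=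
  if l.2 then gen l.1.1 l.1.2 else (gen l.1.1 l.1.2)⁻¹

/-- The element of `Sym(X_n)` represented by a word. -/
def wordProd {n : ℕ} [NeZero n] (w : Word n) : Equiv.Perm (X n) :=
  (w.map evalLetter).prod

end HoughtonPaper

open HoughtonPaper


namespace St18
open HoughtonPaper Equiv

abbrev G2 : Equiv.Perm (X 2) := gen (1 : Fin 2) (by decide)
abbrev T2 : Equiv.Perm (X 2) := tau 2
abbrev K : Subgroup (Equiv.Perm (X 2)) := Subgroup.closure {G2, T2}

lemma fin2_cases (i : Fin 2) : i = 0 ∨ i = 1 := by fin_cases i <;> simp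

lemma G2_apply (p : X 2) : G2 p = genFun 1 p := rfl

lemma G2_apply0 (m : ℕ) : G2 ((0 : Fin 2), m) = ((0 : Fin 2), m + 1) := by
  simp [G2_apply, genFun]

lemma G2_apply1_zero : G2 ((1 : Fin 2), 0) = ((0 : Fin 2), 0) := by
  simp [G2_apply, genFun]

lemma G2_apply1 (m : ℕ) (hm : m ≠ 0) : G2 ((1 : Fin 2), m) = ((1 : Fin 2), m - 1) := by
  simp [G2_apply, genFun, hm]

/-- Coordinatization of `X 2` by `ℤ`. -/
def e : ℤ → X 2 := fun k =>
  if 0 ≤ k then ((0 : Fin 2), k.toNat) else ((1 : Fin 2), (-(k + 1)).toNat)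

lemma e_nonneg (k : ℤ) (hk : 0 ≤ k) : e k = ((0 : Fin 2), k.toNat) := by
  simp [e, hk]

lemma e_neg (k : ℤ) (hk : k < 0) : e k = ((1 : Fin 2), (-(k + 1)).toNat) := by
  simp [e, not_le.mpr hk]

lemma e_inj : Function.Injective e := by
  intro a b hab
  unfold e at hab
  split_ifs at hab with h1 h2 h2 <;>
    simp only [Prod.mk.injEq] at hab <;>
    first
      | omega
      | (exact absurd hab.1 (by decide))
      | (exact absurd hab.1 (by decide))

lemma e_surj : ∀ p : X 2, ∃ k, e k = p := by
  rintro ⟨i, m⟩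
  rcases fin2_cases i with rfl | rfl
  · exact ⟨m, by rw [e_nonneg _ (by omega)]; simp⟩
  · exact ⟨-(m + 1), by rw [e_neg _ (by omega)]; congr 1; omega⟩

lemma gen_e (k : ℤ) : G2 (e k) = e (k + 1) := by
  rcases le_or_gt 0 k with h | h
  · rw [e_nonneg k h, G2_apply0, e_nonneg _ (by omega)]
    congr 1
    omega
  · rw [e_neg k h]
    rcases eq_or_lt_of_le (show k ≤ -1 by omega) with hk1 | hk1
    · subst hk1
      norm_num
      rw [G2_apply1_zero, e_nonneg _ le_rfl]
      simp
    · have hne : (-(k + 1)).toNat ≠ 0 := by omega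
      rw [G2_apply1 _ hne, e_neg _ (by omega)]
      congr 1
      omega

lemma geninv_e (k : ℤ) : G2⁻¹ (e k) = e (k - 1) := by
  have := gen_e (k - 1)
  rw [sub_add_cancel] at this
  rw [← this]
  simp

lemma gpow_e (j k : ℤ) : (G2 ^ j) (e k) = e (k + j) := by
  induction j using Int.induction_on generalizing k with
  | zero => simp
  | succ n ih =>
      rw [show ((n : ℤ) + 1) = (n : ℤ) + 1 from rfl, zpow_add_one, Equiv.Perm.mul_apply,
        gen_e, ih]
      congr 1
      ring
  | pred n ih =>
      rw [show (-(n : ℤ) - 1) = -(n : ℤ) + -1 from by ring, zpow_add, zpow_neg_one,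
        Equiv.Perm.mul_apply, geninv_e, ih]
      congr 1
      ring

lemma G2_mem : G2 ∈ K := Subgroup.subset_closure (by simp)
lemma T2_mem : T2 ∈ K := Subgroup.subset_closure (by simp)

lemma T2_eq : T2 = Equiv.swap (e 0) (e (-1)) := by
  rw [e_nonneg 0 le_rfl, e_neg (-1) (by omega)]
  norm_num [T2, tau]

lemma swap_adj_mem (k : ℤ) : Equiv.swap (e k) (e (k + 1)) ∈ K := by
  have h1 : e k = (G2 ^ (k + 1)) (e (-1)) := by rw [gpow_e]; congr 1; ring
  have h2 : e (k + 1) = (G2 ^ (k + 1)) (e 0) := by rw [gpow_e]; congr 1; ring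
  rw [h1, h2, Equiv.swap_apply_apply, Equiv.swap_comm, ← T2_eq]
  exact mul_mem (mul_mem (zpow_mem G2_mem _) T2_mem) (inv_mem (zpow_mem G2_mem _))

lemma swap_dist_mem (d : ℕ) : ∀ k : ℤ, Equiv.swap (e k) (e (k + (d + 1))) ∈ K := by
  induction d with
  | zero =>
      intro k
      have := swap_adj_mem k
      norm_num at this ⊢
      exact this
  | succ n ih =>
      intro k
      rw [show ((n + 1 : ℕ) : ℤ) + 1 = (n : ℤ) + 1 + 1 by push_cast; ring]
      have hane : e k ≠ e (k + (n + 1)) := fun hh => by have := e_inj hh; omega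
      have hacne : e k ≠ e (k + (n + 1) + 1) := fun hh => by have := e_inj hh; omega
      have key : Equiv.swap (e k) (e (k + (↑n + 1 + 1))) =
          Equiv.swap (e (k + (n + 1))) (e (k + (n + 1) + 1)) *
            Equiv.swap (e k) (e (k + (n + 1))) *
            (Equiv.swap (e (k + (n + 1))) (e (k + (n + 1) + 1)))⁻¹ := by
        rw [← Equiv.swap_apply_apply]
        congr 1
        · exact (Equiv.swap_apply_of_ne_of_ne hane hacne).symm
        · rw [Equiv.swap_apply_left]
          congr 1
          ring
      rw [key]
      exact mul_mem (mul_mem (swap_adj_mem _) (ih k)) (inv_mem (swap_adj_mem _))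

lemma swap_mem (p q : X 2) (hpq : p ≠ q) : Equiv.swap p q ∈ K := by
  obtain ⟨k, rfl⟩ := e_surj p
  obtain ⟨l, rfl⟩ := e_surj q
  rcases lt_trichotomy k l with h | h | h
  · obtain ⟨d, rfl⟩ : ∃ d : ℕ, l = k + (d + 1) := ⟨(l - k - 1).toNat, by omega⟩
    exact swap_dist_mem d k
  · exact absurd (by rw [h]) hpq
  · obtain ⟨d, rfl⟩ : ∃ d : ℕ, k = l + (d + 1) := ⟨(k - l - 1).toNat, by omega⟩
    rw [Equiv.swap_comm]
    exact swap_dist_mem d l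

lemma fsupp_mem (s : Finset (X 2)) :
    ∀ h : Equiv.Perm (X 2), (∀ x, h x ≠ x → x ∈ s) → h ∈ K := by
  induction s using Finset.strongInduction with
  | _ s ih =>
    intro h hs
    by_cases h1 : ∀ x, h x = x
    · rw [show h = 1 from Equiv.ext h1]
      exact one_mem _
    · push_neg at h1
      obtain ⟨a, ha⟩ := h1
      have haS : a ∈ s := hs a ha
      set σ := Equiv.swap a (h a) with hσ
      have key : ∀ x, (σ * h) x ≠ x → x ∈ s.erase a := by
        intro x hx
        rw [Finset.mem_erase]
        constructor
        · rintro rfl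
          exact hx (by simp [hσ, Equiv.Perm.mul_apply, Equiv.swap_apply_right])
        · by_contra hxs
          have hfix : h x = x := by
            by_contra hh; exact hxs (hs x hh)
          apply hx
          rw [Equiv.Perm.mul_apply, hfix, hσ]
          apply Equiv.swap_apply_of_ne_of_ne
          · rintro rfl; exact hxs haS
          · rintro rfl
            exact ha (h.injective hfix)
      have := ih (s.erase a) (Finset.erase_ssubset haS) (σ * h) key
      have hσK : σ ∈ K := swap_mem a (h a) (Ne.symm ha)
      have hrw : h = σ⁻¹ * (σ * h) := by group
      rw [hrw]
      exact mul_mem (inv_mem hσK) this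

/-! ### `InH` is a subgroup -/

lemma evtrans_mul {g g' : Equiv.Perm (X 2)} {t t' : Fin 2 → ℤ} {z z' : ℕ}
    (hg : EvTransFrom g t z) (hg' : EvTransFrom g' t' z') :
    EvTransFrom (g * g') (t + t') (z + z' + (t' 0).natAbs + (t' 1).natAbs) := by
  intro i m hm
  obtain ⟨h1, h2⟩ := hg' i m (by omega)
  have hb : (t' i).natAbs ≤ (t' 0).natAbs + (t' 1).natAbs := by
    rcases fin2_cases i with rfl | rfl <;> omega
  set p := g' (i, m) with hp
  have hzm2 : z ≤ p.2 := by omega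
  obtain ⟨k1, k2⟩ := hg i p.2 hzm2
  have hpe : p = (i, p.2) := by rw [← h1]
  rw [Equiv.Perm.mul_apply, ← hp, hpe]
  refine ⟨k1, ?_⟩
  rw [k2, h2]
  simp only [Pi.add_apply]
  ring

lemma evtrans_inv {g : Equiv.Perm (X 2)} {t : Fin 2 → ℤ} {z : ℕ}
    (hg : EvTransFrom g t z) :
    EvTransFrom g⁻¹ (-t) (z + (t 0).natAbs + (t 1).natAbs) := by
  intro i m hm
  have hb : (t i).natAbs ≤ (t 0).natAbs + (t 1).natAbs := by
    rcases fin2_cases i with rfl | rfl <;> omega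
  set m' := ((m : ℤ) - t i).toNat with hm'
  have hzm' : z ≤ m' := by omega
  obtain ⟨k1, k2⟩ := hg i m' hzm'
  have hgim : g (i, m') = (i, m) := by
    have h2 : (g (i, m')).2 = m := by omega
    exact Prod.ext k1 h2
  have hginv : g⁻¹ (i, m) = (i, m') := by rw [← hgim]; simp
  rw [hginv]
  refine ⟨rfl, ?_⟩
  simp only [Pi.neg_apply]
  omega

lemma inH_one : InH (1 : Equiv.Perm (X 2)) :=
  ⟨0, 0, fun i m _ => by simp⟩

lemma inH_mul {g g' : Equiv.Perm (X 2)} (hg : InH g) (hg' : InH g') : InH (g * g') := by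
  obtain ⟨t, z, ht⟩ := hg
  obtain ⟨t', z', ht'⟩ := hg'
  exact ⟨t + t', _, evtrans_mul ht ht'⟩

lemma inH_inv {g : Equiv.Perm (X 2)} (hg : InH g) : InH g⁻¹ := by
  obtain ⟨t, z, ht⟩ := hg
  exact ⟨-t, _, evtrans_inv ht⟩

/-- Houghton's group as a subgroup. -/
def Hgrp : Subgroup (Equiv.Perm (X 2)) where
  carrier := {g | InH g}
  one_mem' := inH_one
  mul_mem' := inH_mul
  inv_mem' := inH_inv

lemma inH_G2 : InH G2 := by
  refine ⟨![1, -1], 1, fun i m hm => ?_⟩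
  rcases fin2_cases i with rfl | rfl
  · rw [G2_apply0]
    norm_num
  · rw [G2_apply1 m (by omega)]
    norm_num
    omega

lemma inH_T2 : InH T2 := by
  refine ⟨0, 1, fun i m hm => ?_⟩
  have h1 : ((i, m) : X 2) ≠ ((0 : Fin 2), 0) := by
    intro hh; rw [Prod.mk.injEq] at hh; omega
  have h2 : ((i, m) : X 2) ≠ ((1 : Fin 2), 0) := by
    intro hh; rw [Prod.mk.injEq] at hh; omega
  rw [show T2 (i, m) = (i, m) from Equiv.swap_apply_of_ne_of_ne h1 h2]
  simp

/-! ### The balance lemma -/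

lemma balance_le {h : Equiv.Perm (X 2)} {t : Fin 2 → ℤ} {z : ℕ}
    (ht : EvTransFrom h t z) (h0 : t 0 = 0) : t 1 ≤ 0 := by
  by_contra hc
  push_neg at hc
  set c := (t 1).toNat with hcdef
  have hcpos : 0 < c := by omega
  set A : Finset (X 2) := Finset.univ ×ˢ Finset.range z with hA
  set Tset : Finset (X 2) := {(1 : Fin 2)} ×ˢ Finset.Ico z (z + c) with hT
  have key : ∀ p ∈ A ∪ Tset, h⁻¹ p ∈ A := by
    intro p hp
    by_contra hnp
    set q := h⁻¹ p with hq
    have hqp : h q = p := by simp [hq]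
    have hm : z ≤ q.2 := by
      by_contra hzq
      apply hnp
      rw [hA, Finset.mem_product]
      exact ⟨Finset.mem_univ _, Finset.mem_range.mpr (by omega)⟩
    obtain ⟨k1, k2⟩ := ht q.1 q.2 hm
    rw [show ((q.1, q.2) : X 2) = q from rfl, hqp] at k1 k2
    rw [Finset.mem_union] at hp
    rcases fin2_cases q.1 with h01 | h01
    · rw [h01, h0] at k2
      rcases hp with hA' | hT'
      · rw [hA, Finset.mem_product, Finset.mem_range] at hA'
        omega
      · rw [hT, Finset.mem_product, Finset.mem_singleton] at hT'
        rw [k1, h01] at hT'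
        exact absurd hT'.1 (by decide)
    · rw [h01] at k2
      rcases hp with hA' | hT'
      · rw [hA, Finset.mem_product, Finset.mem_range] at hA'
        omega
      · rw [hT, Finset.mem_product, Finset.mem_Ico] at hT'
        omega
  have hsub : A ∪ Tset ⊆ A.image h := fun p hp =>
    Finset.mem_image.mpr ⟨h⁻¹ p, key p hp, by simp⟩
  have hdisj : Disjoint A Tset := by
    rw [Finset.disjoint_left]
    intro p hpA hpT
    rw [hA, Finset.mem_product, Finset.mem_range] at hpA
    rw [hT, Finset.mem_product, Finset.mem_Ico] at hpT
    omega
  have hcard := Finset.card_le_card hsub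
  rw [Finset.card_union_of_disjoint hdisj,
    Finset.card_image_of_injective _ h.injective] at hcard
  have hTcard : Tset.card = c := by
    rw [hT, Finset.card_product, Finset.card_singleton, Nat.card_Ico]
    omega
  omega

/-! ### Powers of the generator are eventually translations -/

lemma evtrans_G2_zpow (j : ℤ) : EvTransFrom (G2 ^ j) ![j, -j] j.natAbs := by
  intro i m hm
  rcases fin2_cases i with rfl | rfl
  · have h1 : ((0 : Fin 2), m) = e m := by rw [e_nonneg _ (by omega)]; simp
    rw [h1, gpow_e, e_nonneg _ (by omega)]
    refine ⟨rfl, ?_⟩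
    norm_num
    omega
  · have h1 : ((1 : Fin 2), m) = e (-(m + 1)) := by
      rw [e_neg _ (by omega)]; congr 1; omega
    rw [h1, gpow_e, e_neg _ (by omega)]
    refine ⟨rfl, ?_⟩
    norm_num
    omega

/-! ### The two directions -/

lemma inH_mem {g : Equiv.Perm (X 2)} (hg : InH g) : g ∈ K := by
  obtain ⟨t, z, ht⟩ := hg
  set j := t 0 with hj
  have hG : EvTransFrom (G2 ^ (-j)) ![-j, j] (-j).natAbs := by
    have := evtrans_G2_zpow (-j)
    simpa using this
  have hmul := evtrans_mul ht hG
  set s : Fin 2 → ℤ := t + ![-j, j] with hs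
  have hs0 : s 0 = 0 := by
    simp only [hs, Pi.add_apply, Matrix.cons_val_zero]
    rw [hj]; ring
  have hle : s 1 ≤ 0 := balance_le hmul hs0
  have hinv := evtrans_inv hmul
  have hinv0 : (-s) 0 = 0 := by simp only [Pi.neg_apply, hs0, neg_zero]
  have hge : (-s) 1 ≤ 0 := balance_le hinv hinv0
  have hs1 : s 1 = 0 := by simp only [Pi.neg_apply] at hge; omega
  set Z := z + (-j).natAbs + ((![-j, j] : Fin 2 → ℤ) 0).natAbs +
    ((![-j, j] : Fin 2 → ℤ) 1).natAbs with hZ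
  have hfix : ∀ x : X 2, (g * G2 ^ (-j)) x ≠ x →
      x ∈ (Finset.univ ×ˢ Finset.range Z : Finset (X 2)) := by
    intro x hx
    by_contra hxs
    apply hx
    have hZx : Z ≤ x.2 := by
      by_contra hzx
      exact hxs (Finset.mem_product.mpr ⟨Finset.mem_univ _, Finset.mem_range.mpr (by omega)⟩)
    obtain ⟨k1, k2⟩ := hmul x.1 x.2 hZx
    have hsx : s x.1 = 0 := by
      rcases fin2_cases x.1 with h01 | h01 <;> rw [h01]
      · exact hs0
      · exact hs1
    rw [hsx] at k2
    have h2 : ((g * G2 ^ (-j)) (x.1, x.2)).2 = x.2 := by omega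
    have := Prod.ext k1 h2
    rw [show ((x.1, x.2) : X 2) = x from rfl] at this
    exact this
  have hKh : g * G2 ^ (-j) ∈ K := fsupp_mem _ _ hfix
  have hrw : g = g * G2 ^ (-j) * G2 ^ j := by group
  rw [hrw]
  exact mul_mem hKh (zpow_mem G2_mem j)

lemma mem_inH {g : Equiv.Perm (X 2)} (hg : g ∈ K) : InH g := by
  have : K ≤ Hgrp := by
    rw [Subgroup.closure_le]
    rintro x hx
    rcases hx with rfl | rfl
    · exact inH_G2
    · exact inH_T2
  exact this hg

end St18

theorem statement18 (g : Equiv.Perm (X 2)) :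
    InH g ↔ g ∈ Subgroup.closure {gen (1 : Fin 2) (by decide), tau 2} := by
  constructor
  · exact St18.inH_mem
  · exact St18.mem_inH
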